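/- Let r, n, m ≥ 1 and let P : ℤ^r → ℂ^{m×n} be the symbol of an m×n system of Fourier multipliers on the torus 𝕋^r. Suppose there exist C > 0, k ∈ ℝ and a finite set F ⊆ ℤ^r such that λ_min(P(ξ)) ≥ C(1+‖ξ‖²)^{k/2} for all ξ ∈ ℤ^r \ F. Then for every u : ℤ^r → ℂ^n of polynomial growth such that ξ ↦ P(ξ)u(ξ) ∈ ℂ^m is rapidly decreasing, u is itself rapidly decreasing (i.e. the system is globally hypoelliptic). -/
import Mathlib


noncomputable section

open scoped BigOperators

/-- Euclidean (ℓ²) norm of a complex vector. -/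
def l2norm {n : Type*} [Fintype n] (v : n → ℂ) : ℝ :=
  Real.sqrt (∑ i, ‖v i‖ ^ 2)

/-- Smallest singular value of a complex matrix, characterized as the infimum of
`‖A v‖₂` over unit vectors `v`. -/
def sminVal {m n : Type*} [Fintype m] [Fintype n] (A : Matrix m n ℂ) : ℝ :=
  sInf {x : ℝ | ∃ v : n → ℂ, l2norm v = 1 ∧ x = l2norm (A.mulVec v)}

/-- The weight `1 + ‖ξ‖²` for a frequency `ξ ∈ ℤ^r`. -/
def wt {r : ℕ} (ξ : Fin r → ℤ) : ℝ :=
  1 + ∑ i, ((ξ i : ℝ)) ^ 2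

/-- A vector-valued sequence indexed by `ℤ^r` is rapidly decreasing. -/
def RapidDecayV {r n : ℕ} (u : (Fin r → ℤ) → (Fin n → ℂ)) : Prop :=
  ∀ M : ℝ, 0 < M → ∃ C : ℝ, 0 < C ∧ ∀ ξ, l2norm (u ξ) ≤ C * wt ξ ^ (-(M / 2))

/-- A vector-valued sequence indexed by `ℤ^r` has polynomial growth. -/
def PolyGrowthV {r n : ℕ} (u : (Fin r → ℤ) → (Fin n → ℂ)) : Prop :=
  ∃ C N : ℝ, 0 < C ∧ 0 < N ∧ ∀ ξ, l2norm (u ξ) ≤ C * wt ξ ^ (N / 2)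

lemma l2norm_nonneg' {n : Type*} [Fintype n] (v : n → ℂ) : 0 ≤ l2norm v :=
  Real.sqrt_nonneg _

lemma l2norm_smul' {n : Type*} [Fintype n] (c : ℂ) (v : n → ℂ) :
    l2norm (c • v) = ‖c‖ * l2norm v := by
  unfold l2norm
  simp only [Pi.smul_apply, smul_eq_mul, norm_mul, mul_pow]
  rw [← Finset.mul_sum, Real.sqrt_mul (by positivity), Real.sqrt_sq (norm_nonneg c)]

lemma l2norm_pos' {n : Type*} [Fintype n] {v : n → ℂ} (hv : v ≠ 0) : 0 < l2norm v := by
  obtain ⟨i, hi⟩ := Function.ne_iff.mp hv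
  unfold l2norm
  apply Real.sqrt_pos.mpr
  have h1 : (0:ℝ) < ‖v i‖ ^ 2 := pow_pos (norm_pos_iff.mpr hi) 2
  calc (0:ℝ) < ‖v i‖ ^ 2 := h1
    _ ≤ ∑ j, ‖v j‖ ^ 2 := Finset.single_le_sum (f := fun j => ‖v j‖ ^ 2) (fun j _ => by positivity) (Finset.mem_univ i)

lemma sminVal_mul_le' {m n : Type*} [Fintype m] [Fintype n] (A : Matrix m n ℂ) (v : n → ℂ) :
    sminVal A * l2norm v ≤ l2norm (A.mulVec v) := by
  rcases eq_or_ne v 0 with rfl | hv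
  · simp [l2norm, Matrix.mulVec_zero]
  · have hpos := l2norm_pos' hv
    set c : ℂ := ((l2norm v : ℝ) : ℂ)⁻¹ with hc
    have hnc : ‖c‖ = (l2norm v)⁻¹ := by
      rw [hc, norm_inv, Complex.norm_real, Real.norm_eq_abs, abs_of_pos hpos]
    have hw : l2norm (c • v) = 1 := by
      rw [l2norm_smul', hnc, inv_mul_cancel₀ (ne_of_gt hpos)]
    have hmem : l2norm (A.mulVec (c • v)) ∈
        {x : ℝ | ∃ w : n → ℂ, l2norm w = 1 ∧ x = l2norm (A.mulVec w)} :=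
      ⟨c • v, hw, rfl⟩
    have hbdd : BddBelow {x : ℝ | ∃ w : n → ℂ, l2norm w = 1 ∧ x = l2norm (A.mulVec w)} := by
      refine ⟨0, fun x hx => ?_⟩
      obtain ⟨w, _, rfl⟩ := hx
      exact l2norm_nonneg' _
    have hle : sminVal A ≤ l2norm (A.mulVec (c • v)) := csInf_le hbdd hmem
    have heq : l2norm (A.mulVec (c • v)) = (l2norm v)⁻¹ * l2norm (A.mulVec v) := by
      rw [Matrix.mulVec_smul, l2norm_smul', hnc]
    rw [heq] at hle
    calc sminVal A * l2norm v ≤ ((l2norm v)⁻¹ * l2norm (A.mulVec v)) * l2norm v :=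
          mul_le_mul_of_nonneg_right hle (le_of_lt hpos)
      _ = l2norm (A.mulVec v) := by field_simp

lemma one_le_wt' {r : ℕ} (ξ : Fin r → ℤ) : 1 ≤ wt ξ := by
  unfold wt
  have : (0:ℝ) ≤ ∑ i, ((ξ i : ℝ)) ^ 2 := Finset.sum_nonneg fun i _ => sq_nonneg _
  linarith

theorem system_GH_sufficient (r n m : ℕ) (hr : 1 ≤ r) (hn : 1 ≤ n) (hm : 1 ≤ m)
    (P : (Fin r → ℤ) → Matrix (Fin m) (Fin n) ℂ)
    (C k : ℝ) (hC : 0 < C) (F : Set (Fin r → ℤ)) (hF : F.Finite)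
    (hbound : ∀ ξ, ξ ∉ F → sminVal (P ξ) ≥ C * wt ξ ^ (k / 2)) :
    ∀ u : (Fin r → ℤ) → (Fin n → ℂ), PolyGrowthV u →
      RapidDecayV (fun ξ => (P ξ).mulVec (u ξ)) → RapidDecayV u := by
  intro u _hpoly hPu M hM
  have hM' : 0 < M + |k| := by have := abs_nonneg k; linarith
  obtain ⟨C₁, hC₁, h₁⟩ := hPu (M + |k|) hM'
  set B : ℝ := ∑ ξ ∈ hF.toFinset, l2norm (u ξ) * wt ξ ^ (M / 2) with hBdef
  have hB : 0 ≤ B := Finset.sum_nonneg fun ξ _ => by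
    have h1 := l2norm_nonneg' (u ξ)
    have h2 : (0:ℝ) ≤ wt ξ ^ (M / 2) :=
      Real.rpow_nonneg (by linarith [one_le_wt' ξ]) _
    positivity
  refine ⟨C⁻¹ * C₁ + B + 1, by positivity, fun ξ => ?_⟩
  have hwt1 := one_le_wt' ξ
  have hwtpos : (0:ℝ) < wt ξ := lt_of_lt_of_le one_pos hwt1
  have hrpow_pos : ∀ a : ℝ, (0:ℝ) < wt ξ ^ a := fun a => Real.rpow_pos_of_pos hwtpos a
  by_cases hξ : ξ ∈ F
  · -- exceptional set
    have hterm : l2norm (u ξ) * wt ξ ^ (M / 2) ≤ B := by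
      refine Finset.single_le_sum (f := fun ζ => l2norm (u ζ) * wt ζ ^ (M / 2))
        (fun ζ _ => ?_) (hF.mem_toFinset.mpr hξ)
      have h1 := l2norm_nonneg' (u ζ)
      have h2 : (0:ℝ) ≤ wt ζ ^ (M / 2) :=
        Real.rpow_nonneg (by linarith [one_le_wt' ζ]) _
      positivity
    have hkey : l2norm (u ξ) ≤ B * wt ξ ^ (-(M / 2)) := by
      rw [Real.rpow_neg (le_of_lt hwtpos), ← div_eq_mul_inv, le_div_iff₀ (hrpow_pos _)]
      exact hterm
    calc l2norm (u ξ) ≤ B * wt ξ ^ (-(M / 2)) := hkey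
      _ ≤ (C⁻¹ * C₁ + B + 1) * wt ξ ^ (-(M / 2)) := by
          apply mul_le_mul_of_nonneg_right _ (le_of_lt (hrpow_pos _))
          have : 0 < C⁻¹ * C₁ := by positivity
          linarith
  · have h0 : C * wt ξ ^ (k / 2) * l2norm (u ξ) ≤ C₁ * wt ξ ^ (-((M + |k|) / 2)) := by
      calc C * wt ξ ^ (k / 2) * l2norm (u ξ)
          ≤ sminVal (P ξ) * l2norm (u ξ) :=
            mul_le_mul_of_nonneg_right (hbound ξ hξ) (l2norm_nonneg' _)
        _ ≤ l2norm ((P ξ).mulVec (u ξ)) := sminVal_mul_le' _ _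
        _ ≤ C₁ * wt ξ ^ (-((M + |k|) / 2)) := h₁ ξ
    have h2 : l2norm (u ξ) ≤ (C₁ * wt ξ ^ (-((M + |k|) / 2))) / (C * wt ξ ^ (k / 2)) := by
      rw [le_div_iff₀ (by positivity)]
      calc l2norm (u ξ) * (C * wt ξ ^ (k / 2))
          = C * wt ξ ^ (k / 2) * l2norm (u ξ) := mul_comm _ _
        _ ≤ _ := h0
    have h3 : (C₁ * wt ξ ^ (-((M + |k|) / 2))) / (C * wt ξ ^ (k / 2))
        = C⁻¹ * C₁ * wt ξ ^ (-((M + |k|) / 2) - k / 2) := by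
      rw [Real.rpow_sub hwtpos]
      field_simp
    have h4 : wt ξ ^ (-((M + |k|) / 2) - k / 2) ≤ wt ξ ^ (-(M / 2)) :=
      Real.rpow_le_rpow_of_exponent_le hwt1 (by rcases abs_cases k with ⟨h, _⟩ | ⟨h, _⟩ <;> rw [h] <;> linarith)
    calc l2norm (u ξ) ≤ C⁻¹ * C₁ * wt ξ ^ (-((M + |k|) / 2) - k / 2) := h3 ▸ h2
      _ ≤ C⁻¹ * C₁ * wt ξ ^ (-(M / 2)) :=
          mul_le_mul_of_nonneg_left h4 (by positivity)
      _ ≤ (C⁻¹ * C₁ + B + 1) * wt ξ ^ (-(M / 2)) := by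
          apply mul_le_mul_of_nonneg_right _ (le_of_lt (hrpow_pos _))
          linarith
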